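/- Let O be a valuation ring whose Krull dimension is finite and at least 1, with maximal ideal m. Then there exists an element a ∈ m such that the only prime ideal of O containing a is m; equivalently, the vanishing locus of a in Spec(O) is exactly the closed point, i.e., the radical of the principal ideal (a) equals m. -/

import Mathlib

/-- In a valuation ring of finite Krull dimension at least `1`, with maximal ideal `m`,
there is an element `a ∈ m` whose only prime containing it is `m`; equivalently the
radical of `(a)` is `m`. -/
theorem statement_5 (O : Type*) [CommRing O] [IsDomain O] [ValuationRing O]
    (hfin : ∃ r : ℕ, ringKrullDim O = r) (hpos : 1 ≤ ringKrullDim O) :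
    ∃ a ∈ IsLocalRing.maximalIdeal O,
      (∀ p : Ideal O, p.IsPrime → a ∈ p → p = IsLocalRing.maximalIdeal O) ∧
      (Ideal.span {a}).radical = IsLocalRing.maximalIdeal O := by
  classical
  obtain ⟨r, hr⟩ := hfin
  set m := IsLocalRing.maximalIdeal O with hm
  -- ⊥ is a prime strictly below m
  have hbotm : (⊥ : Ideal O) < m := by
    rcases eq_or_lt_of_le (bot_le : (⊥ : Ideal O) ≤ m) with h | h
    · exfalso
      have hsub : Subsingleton (PrimeSpectrum O) := by
        constructor
        intro p q
        have hp : p.asIdeal = ⊥ :=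
          le_antisymm (h ▸ IsLocalRing.le_maximalIdeal p.isPrime.ne_top) bot_le
        have hq : q.asIdeal = ⊥ :=
          le_antisymm (h ▸ IsLocalRing.le_maximalIdeal q.isPrime.ne_top) bot_le
        exact PrimeSpectrum.ext (hp.trans hq.symm)
      have h0 := Order.krullDim_nonpos_of_subsingleton (α := PrimeSpectrum O)
      have : (1 : WithBot (WithTop ℕ)) ≤ 0 := le_trans hpos h0
      norm_num at this
    · exact h
  -- the set of primes strictly below m
  set S : Set (Ideal O) := {p | p.IsPrime ∧ p < m} with hS
  have hSne : (⊥ : Ideal O) ∈ S := ⟨Ideal.bot_prime, hbotm⟩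
  -- S has a maximal element; otherwise we get chains of arbitrary length
  have hmax : ∃ p ∈ S, ∀ q ∈ S, ¬ p < q := by
    by_contra hc
    push_neg at hc
    choose g hgS hglt using hc
    let f : ℕ → S := fun n => Nat.rec ⟨⊥, hSne⟩ (fun _ p => ⟨g p.1 p.2, hgS p.1 p.2⟩) n
    have hf : ∀ n, (f n).1 < (f (n + 1)).1 := by
      intro n
      show (f n).1 < g (f n).1 (f n).2
      exact hglt _ _
    have hfmono : StrictMono fun n => (f n).1 := strictMono_nat_of_lt_succ hf
    let g' : ℕ → PrimeSpectrum O := fun n => ⟨(f n).1, (f n).2.1⟩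
    have hg'mono : StrictMono g' := fun i j hij =>
      (PrimeSpectrum.asIdeal_lt_asIdeal _ _).mp (hfmono hij)
    have hnat : InfiniteDimensionalOrder ℕ :=
      ⟨fun n => ⟨LTSeries.mk n (fun i => (i : ℕ)) (fun _ _ h => h), rfl⟩⟩
    have hinf : InfiniteDimensionalOrder (PrimeSpectrum O) :=
      infiniteDimensionalOrder_of_strictMono g' hg'mono
    rw [ringKrullDim] at hr
    have hle := Order.LTSeries.length_le_krullDim (LTSeries.withLength (PrimeSpectrum O) (r + 1))
    rw [LTSeries.length_withLength, hr] at hle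
    norm_cast at hle
    omega
  obtain ⟨p', hp'S, hp'max⟩ := hmax
  obtain ⟨a, ham, hap'⟩ := SetLike.exists_of_lt hp'S.2
  have key : ∀ p : Ideal O, p.IsPrime → a ∈ p → p = m := by
    intro p hp hap
    by_contra hne
    have hpm : p < m := lt_of_le_of_ne (IsLocalRing.le_maximalIdeal hp.ne_top) hne
    have hpS : p ∈ S := ⟨hp, hpm⟩
    rcases (ValuationRing.le_total_ideal O).total p p' with h | h
    · exact hap' (h hap)
    · rcases eq_or_lt_of_le h with h' | h'
      · exact hap' (h' ▸ hap)
      · exact hp'max p hpS h'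
  refine ⟨a, ham, key, ?_⟩
  rw [Ideal.radical_eq_sInf]
  apply le_antisymm
  · exact sInf_le ⟨Ideal.span_le.mpr (Set.singleton_subset_iff.mpr ham),
      (IsLocalRing.maximalIdeal.isMaximal O).isPrime⟩
  · refine le_sInf fun J hJ => ?_
    have haJ : a ∈ J := hJ.1 (Ideal.mem_span_singleton_self a)
    exact le_of_eq (key J hJ.2 haJ).symm
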